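/- In a reduced root-closed commutative cancellative monoid M, if q ∈ M and x ∈ M satisfy mq ≤_M nx for some positive integers m ≥ n, then q ≤_M x (here a ≤_M b means b − a ∈ M in the quotient group). -/
import Mathlib


/-- In a reduced root-closed commutative cancellative monoid `M` (realized as
an additive submonoid of its quotient group, here an ambient abelian group `G` with the
quotient group being `G(M) = closure M`), if `q, x ∈ M` and `m•q ≤_M n•x` for positive
integers `m ≥ n`, then `q ≤_M x`. -/
theorem stmt_15 (G : Type*) [AddCommGroup G] (M : AddSubmonoid G)
    (hred : ∀ x ∈ M, -x ∈ M → x = 0)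
    (hrc : ∀ z ∈ AddSubgroup.closure (M : Set G),
      (∃ n : ℕ, 0 < n ∧ n • z ∈ M) → z ∈ M)
    (q x : G) (hq : q ∈ M) (hx : x ∈ M)
    (m n : ℕ) (hn : 0 < n) (hmn : n ≤ m)
    (h : ∃ t ∈ M, n • x = m • q + t) :
    ∃ t ∈ M, x = q + t := by
  obtain ⟨t, ht, hxt⟩ := h
  have hz : x - q ∈ AddSubgroup.closure (M : Set G) :=
    sub_mem (AddSubgroup.subset_closure hx) (AddSubgroup.subset_closure hq)
  have key : n • (x - q) = (m - n) • q + t := by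
    have h2 : n • x = (n + (m - n)) • q + t := by
      rw [Nat.add_sub_cancel' hmn]; exact hxt
    rw [smul_sub, h2, add_nsmul]; abel
  have hm : n • (x - q) ∈ M := key ▸ M.add_mem (M.nsmul_mem hq _) ht
  exact ⟨x - q, hrc _ hz ⟨n, hn, hm⟩, by abel⟩
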